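/- Let R be a (possibly non-unital) ring, let e ∈ R be an idempotent with ReR = R, and let I be a two-sided ideal of R that has a countable approximate unit consisting of idempotents. Then the two-sided ideal of R generated by eIe equals I. -/

import Mathlib

/-- If `e` is an idempotent in `R` with `ReR = R` and `I` is a two-sided ideal of `R` having a
countable approximate unit of idempotents, then the two-sided ideal generated by `eIe` is `I`. -/
theorem stmt5 {R : Type*} [NonUnitalRing R] (e : R) (he : e * e = e)
    (hfull : ∀ x : R, x ∈ AddSubgroup.closure
      {y : R | (∃ r, y = e * r) ∨ (∃ r, y = r * e) ∨ (∃ r₁ r₂, y = r₁ * e * r₂)})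
    (I : TwoSidedIdeal R)
    (u : ℕ → R) (humem : ∀ n, u n ∈ I) (huid : ∀ n, u n * u n = u n)
    (huchain : ∀ n, u (n + 1) * u n = u n ∧ u n * u (n + 1) = u n)
    (huabs : ∀ x ∈ I, ∃ n, u n * x = x ∧ x * u n = x) :
    TwoSidedIdeal.span {x : R | ∃ a ∈ I, x = e * a * e} = I := by
  set S : Set R := {x : R | ∃ a ∈ I, x = e * a * e} with hS
  set J : TwoSidedIdeal R := TwoSidedIdeal.span S with hJdef
  have hJ : ∀ a ∈ I, e * a * e ∈ J := fun a ha =>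
    TwoSidedIdeal.subset_span ⟨a, ha, rfl⟩
  apply le_antisymm
  · -- span ≤ I
    intro x hx
    rw [hJdef, TwoSidedIdeal.mem_span_iff] at hx
    exact hx I (by rintro y ⟨a, ha, rfl⟩; exact I.mul_mem_right _ _ (I.mul_mem_left _ _ ha))
  · intro x hx
    -- claim A
    have claimA : ∀ y ∈ I, ∀ s ∈ AddSubgroup.closure
        {y : R | (∃ r, y = e * r) ∨ (∃ r, y = r * e) ∨ (∃ r₁ r₂, y = r₁ * e * r₂)},
        e * y * s ∈ J := by
      intro y hy s hs
      induction hs using AddSubgroup.closure_induction with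
      | mem z hz =>
        rcases hz with ⟨r, rfl⟩ | ⟨r, rfl⟩ | ⟨r₁, r₂, rfl⟩
        · have : e * y * (e * r) = (e * y * e) * r := by simp only [mul_assoc]
          rw [this]; exact J.mul_mem_right _ _ (hJ y hy)
        · have : e * y * (r * e) = e * (y * r) * e := by simp only [mul_assoc]
          rw [this]; exact hJ _ (I.mul_mem_right _ _ hy)
        · have : e * y * (r₁ * e * r₂) = (e * (y * r₁) * e) * r₂ := by simp only [mul_assoc]
          rw [this]; exact J.mul_mem_right _ _ (hJ _ (I.mul_mem_right _ _ hy))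
      | zero => simpa using J.zero_mem
      | add a b _ _ ha hb => rw [mul_add]; exact J.add_mem ha hb
      | neg a _ ha => rw [mul_neg]; exact J.neg_mem ha
    -- claim B
    have claimB : ∀ y ∈ I, ∀ n, ∀ t ∈ AddSubgroup.closure
        {y : R | (∃ r, y = e * r) ∨ (∃ r, y = r * e) ∨ (∃ r₁ r₂, y = r₁ * e * r₂)},
        t * y * u n ∈ J := by
      intro y hy n t ht
      induction ht using AddSubgroup.closure_induction with
      | mem z hz =>
        rcases hz with ⟨r, rfl⟩ | ⟨r, rfl⟩ | ⟨r₁, r₂, rfl⟩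
        · have : e * r * y * u n = e * (r * y) * u n := by simp only [mul_assoc]
          rw [this]; exact claimA _ (I.mul_mem_left _ _ hy) _ (hfull (u n))
        · have : r * e * y * u n = r * (e * y * u n) := by simp only [mul_assoc]
          rw [this]; exact J.mul_mem_left _ _ (claimA _ hy _ (hfull (u n)))
        · have : r₁ * e * r₂ * y * u n = r₁ * (e * (r₂ * y) * u n) := by simp only [mul_assoc]
          rw [this]; exact J.mul_mem_left _ _ (claimA _ (I.mul_mem_left _ _ hy) _ (hfull (u n)))
      | zero => simpa using J.zero_mem
      | add a b _ _ ha hb => rw [add_mul, add_mul]; exact J.add_mem ha hb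
      | neg a _ ha => rw [neg_mul, neg_mul]; exact J.neg_mem ha
    obtain ⟨n, h1, h2⟩ := huabs x hx
    have : x = u n * x * u n := by rw [h1, h2]
    rw [this]
    exact claimB x hx n _ (hfull (u n))
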